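/- Let f₁, …, f_n : ℝ^p → ℝ be differentiable with L-Lipschitz gradients, and suppose each f_i is twice differentiable with Hessian ∇²f_i(x) ⪰ μI for all x, where 0 < μ. Let W be a real n×n matrix with W𝟙 = 𝟙 and set η = ‖I − W‖ (ℓ₂ operator norm). Let X, X̂ ∈ ℝ^{n×p} with rows x_i, x̂_i, let x̄ = (1/n)∑ᵢ xᵢ, let y₁, …, y_n ∈ ℝ^p, set d_i = (∇²f_i(x_i))⁻¹ y_i and let D ∈ ℝ^{n×p} have rows d_i. Define X⁺ = X − γ·(I − W)·X̂ − ε·D with rows x_i⁺. Then ∑ᵢ ‖∇f_i(x_i⁺) − ∇f_i(x_i)‖² ≤ 3L²γ²η²‖X − X̂‖² + 3L²γ²η²‖X − 𝟙x̄‖² + (3L²ε²/μ²)·∑ᵢ ‖y_i‖², where ‖·‖ on n×p matrices is the Frobenius norm ‖Z‖ = (∑ᵢ ‖zᵢ‖²)^{1/2} with zᵢ the rows of Z. -/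

import Mathlib

open scoped Matrix

lemma enorm_sq' {p : ℕ} (u : EuclideanSpace ℝ (Fin p)) : ‖u‖ ^ 2 = ∑ j, (u j) ^ 2 := by
  rw [EuclideanSpace.norm_eq, Real.sq_sqrt (by positivity)]
  simp [sq_abs]

lemma opnorm_rows {n p : ℕ} (A : Matrix (Fin n) (Fin n) ℝ) (M : Matrix (Fin n) (Fin p) ℝ) :
    ∑ i, ∑ j, ((A * M) i j) ^ 2
      ≤ ‖(Matrix.toEuclideanCLM (𝕜 := ℝ) A :
          EuclideanSpace ℝ (Fin n) →L[ℝ] EuclideanSpace ℝ (Fin n))‖ ^ 2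
        * ∑ i, ∑ j, (M i j) ^ 2 := by
  rw [Finset.sum_comm,
    show (∑ i, ∑ j, (M i j) ^ 2) = ∑ j, ∑ i, (M i j) ^ 2 from Finset.sum_comm,
    Finset.mul_sum]
  apply Finset.sum_le_sum
  intro j _
  set T := (Matrix.toEuclideanCLM (𝕜 := ℝ) A :
          EuclideanSpace ℝ (Fin n) →L[ℝ] EuclideanSpace ℝ (Fin n)) with hT
  set u : EuclideanSpace ℝ (Fin n) := (WithLp.equiv 2 (Fin n → ℝ)).symm (fun i => M i j) with hu
  have key : ∑ i, ((A * M) i j) ^ 2 = ‖T u‖ ^ 2 := by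
    rw [hT, hu, WithLp.equiv_symm_apply, Matrix.toEuclideanCLM_toLp, enorm_sq']
    simp [Matrix.mul_apply, Matrix.mulVec, dotProduct]
  have h1 : ‖T u‖ ≤ ‖T‖ * ‖u‖ := T.le_opNorm u
  have h2 : ‖u‖ ^ 2 = ∑ i, (M i j) ^ 2 := by rw [enorm_sq']; simp [hu]
  have h3 : ‖T u‖ ^ 2 ≤ (‖T‖ * ‖u‖) ^ 2 := pow_le_pow_left₀ (norm_nonneg _) h1 2
  rw [key, ← h2]
  nlinarith [h3]

lemma inv_vec_bound {p : ℕ} {μ : ℝ} (hμ : 0 < μ) (H : Matrix (Fin p) (Fin p) ℝ)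
    (h : (H - μ • 1).PosSemidef) (v : Fin p → ℝ) :
    ‖((WithLp.equiv 2 (Fin p → ℝ)).symm (H⁻¹ *ᵥ v) : EuclideanSpace ℝ (Fin p))‖
      ≤ μ⁻¹ * ‖((WithLp.equiv 2 (Fin p → ℝ)).symm v : EuclideanSpace ℝ (Fin p))‖ := by
  have hlow : ∀ u : Fin p → ℝ, μ * (u ⬝ᵥ u) ≤ u ⬝ᵥ (H *ᵥ u) := by
    intro u
    have := h.dotProduct_mulVec_nonneg u
    simp only [Matrix.sub_mulVec, Matrix.smul_mulVec, Matrix.one_mulVec,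
      dotProduct_sub, dotProduct_smul, star_trivial, smul_eq_mul,
      sub_nonneg] at this
    linarith [this]
  have hH : H.IsHermitian := by
    have h1 : ((μ • 1 : Matrix (Fin p) (Fin p) ℝ)).IsHermitian := by
      simp [Matrix.IsHermitian]
    have := h.1.add h1
    simpa using this
  have hpd : H.PosDef := by
    refine Matrix.PosDef.of_dotProduct_mulVec_pos hH fun u hu => ?_
    have hu2 : 0 < u ⬝ᵥ u := by
      obtain ⟨j, hj⟩ := Function.ne_iff.mp hu
      have : (0:ℝ) < ∑ k, u k * u k := by
        apply Finset.sum_pos' (fun k _ => mul_self_nonneg _)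
        exact ⟨j, Finset.mem_univ _, mul_self_pos.mpr hj⟩
      simpa [dotProduct] using this
    have := hlow u
    simp only [star_trivial]
    nlinarith
  set d : Fin p → ℝ := H⁻¹ *ᵥ v with hd
  have hHd : H *ᵥ d = v := by
    rw [hd, Matrix.mulVec_mulVec, Matrix.mul_nonsing_inv _ hpd.det_pos.ne'.isUnit,
      Matrix.one_mulVec]
  set dE : EuclideanSpace ℝ (Fin p) := (WithLp.equiv 2 (Fin p → ℝ)).symm d
  set vE : EuclideanSpace ℝ (Fin p) := (WithLp.equiv 2 (Fin p → ℝ)).symm v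
  have hdd : d ⬝ᵥ d = ‖dE‖ ^ 2 := by
    rw [enorm_sq']; simp [dotProduct, dE, sq]
  have hcs : d ⬝ᵥ v ≤ ‖dE‖ * ‖vE‖ := by
    have h1 := real_inner_le_norm dE vE
    have hin : (inner ℝ dE vE : ℝ) = d ⬝ᵥ v := by
      simp [PiLp.inner_apply, dE, vE, dotProduct, mul_comm]
    linarith
  have hkey : μ * ‖dE‖ ^ 2 ≤ ‖dE‖ * ‖vE‖ := by
    have := hlow d
    rw [hHd, hdd] at this
    linarith
  rcases eq_or_lt_of_le (norm_nonneg dE) with h0 | h0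
  · rw [← h0]; positivity
  · have h1 : μ * ‖dE‖ ≤ ‖vE‖ := by nlinarith
    rw [inv_mul_eq_div, le_div_iff₀ hμ]
    linarith

/-- Frobenius norm of a real `n × p` matrix. -/
noncomputable def frobeniusNorm {n p : ℕ} (Z : Matrix (Fin n) (Fin p) ℝ) : ℝ :=
  Real.sqrt (∑ i, ∑ j, (Z i j) ^ 2)

lemma frob_sq {n p : ℕ} (Z : Matrix (Fin n) (Fin p) ℝ) :
    frobeniusNorm Z ^ 2 = ∑ i, ∑ j, (Z i j) ^ 2 := by
  rw [frobeniusNorm]; exact Real.sq_sqrt (by positivity)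

set_option maxHeartbeats 1000000 in
/-- Bound on the change of the stacked gradient across one CONGO update. -/
theorem stacked_gradient_change_bound (n p : ℕ) (μ L γ ε η : ℝ) (hμ : 0 < μ)
    (f : Fin n → EuclideanSpace ℝ (Fin p) → ℝ)
    (hdiff : ∀ i, Differentiable ℝ (f i))
    (hlip : ∀ i (a b : EuclideanSpace ℝ (Fin p)),
      ‖gradient (f i) a - gradient (f i) b‖ ≤ L * ‖a - b‖)
    (Hs : Fin n → EuclideanSpace ℝ (Fin p) → Matrix (Fin p) (Fin p) ℝ)
    (hHess : ∀ i x, HasFDerivAt (gradient (f i))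
      (LinearMap.toContinuousLinearMap (Matrix.toEuclideanLin (Hs i x))) x)
    (hHsPSD : ∀ i x, (Hs i x - μ • 1).PosSemidef)
    (W : Matrix (Fin n) (Fin n) ℝ) (hW : ∀ i, ∑ j, W i j = 1)
    (hη : η = ‖(Matrix.toEuclideanCLM (𝕜 := ℝ) (1 - W) :
      EuclideanSpace ℝ (Fin n) →L[ℝ] EuclideanSpace ℝ (Fin n))‖)
    (X Xh : Matrix (Fin n) (Fin p) ℝ)
    (x : Fin n → EuclideanSpace ℝ (Fin p))
    (hx : ∀ i, x i = (WithLp.equiv 2 (Fin p → ℝ)).symm (X i))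
    (xbar : EuclideanSpace ℝ (Fin p)) (hxbar : xbar = (1 / (n : ℝ)) • ∑ i, x i)
    (y : Fin n → EuclideanSpace ℝ (Fin p))
    (D : Matrix (Fin n) (Fin p) ℝ)
    (hD : ∀ i, D i = ((Hs i (x i))⁻¹).mulVec ((WithLp.equiv 2 (Fin p → ℝ)) (y i)))
    (Xp : Matrix (Fin n) (Fin p) ℝ)
    (hXp : Xp = X - γ • ((1 - W) * Xh) - ε • D)
    (xp : Fin n → EuclideanSpace ℝ (Fin p))
    (hxp : ∀ i, xp i = (WithLp.equiv 2 (Fin p → ℝ)).symm (Xp i)) :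
    ∑ i, ‖gradient (f i) (xp i) - gradient (f i) (x i)‖ ^ 2
      ≤ 3 * L ^ 2 * γ ^ 2 * η ^ 2 * frobeniusNorm (X - Xh) ^ 2
        + 3 * L ^ 2 * γ ^ 2 * η ^ 2
            * frobeniusNorm (X - Matrix.of fun _ j => xbar j) ^ 2
        + (3 * L ^ 2 * ε ^ 2 / μ ^ 2) * ∑ i, ‖y i‖ ^ 2 := by
  classical
  set B : Matrix (Fin n) (Fin p) ℝ := Matrix.of fun _ j => xbar j with hBdef
  set A1 : Matrix (Fin n) (Fin p) ℝ := (1 - W) * (X - Xh) with hA1def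
  set A2 : Matrix (Fin n) (Fin p) ℝ := (1 - W) * (X - B) with hA2def
  have hWB : (1 - W) * B = 0 := by
    ext i j
    have h1 : ∑ k, (1 : Matrix (Fin n) (Fin n) ℝ) i k = 1 := by simp [Matrix.one_apply]
    simp only [Matrix.mul_apply, Matrix.sub_apply, sub_mul, Finset.sum_sub_distrib,
      hBdef, Matrix.of_apply, ← Finset.sum_mul, h1, hW i, one_mul, Matrix.zero_apply]
    ring
  have hXpX : Xp - X = γ • A1 - γ • A2 - ε • D := by
    rw [hXp, hA1def, hA2def, Matrix.mul_sub, Matrix.mul_sub, hWB, sub_zero]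
    module
  have hrow : ∀ i, xp i - x i
      = γ • ((WithLp.equiv 2 (Fin p → ℝ)).symm (A1 i))
        - γ • ((WithLp.equiv 2 (Fin p → ℝ)).symm (A2 i))
        - ε • ((WithLp.equiv 2 (Fin p → ℝ)).symm (D i)) := by
    intro i
    ext j
    have hj := congrFun (congrFun hXpX i) j
    simp only [Matrix.sub_apply, Matrix.smul_apply, smul_eq_mul] at hj
    simp only [hxp i, hx i, PiLp.sub_apply, PiLp.smul_apply, WithLp.equiv_symm_apply, PiLp.toLp_apply,
      smul_eq_mul]
    linarith [hj]
  -- per-row bound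
  have hrowbound : ∀ i,
      ‖gradient (f i) (xp i) - gradient (f i) (x i)‖ ^ 2
        ≤ 3 * L ^ 2 * γ ^ 2 * ‖((WithLp.equiv 2 (Fin p → ℝ)).symm (A1 i) : EuclideanSpace ℝ (Fin p))‖ ^ 2
          + 3 * L ^ 2 * γ ^ 2 * ‖((WithLp.equiv 2 (Fin p → ℝ)).symm (A2 i) : EuclideanSpace ℝ (Fin p))‖ ^ 2
          + 3 * L ^ 2 * ε ^ 2 * ‖((WithLp.equiv 2 (Fin p → ℝ)).symm (D i) : EuclideanSpace ℝ (Fin p))‖ ^ 2 := by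
    intro i
    set a := ((WithLp.equiv 2 (Fin p → ℝ)).symm (A1 i) : EuclideanSpace ℝ (Fin p))
    set b := ((WithLp.equiv 2 (Fin p → ℝ)).symm (A2 i) : EuclideanSpace ℝ (Fin p))
    set c := ((WithLp.equiv 2 (Fin p → ℝ)).symm (D i) : EuclideanSpace ℝ (Fin p))
    have h1 := hlip i (xp i) (x i)
    have h2 : ‖xp i - x i‖ ≤ |γ| * ‖a‖ + |γ| * ‖b‖ + |ε| * ‖c‖ := by
      rw [hrow i]
      calc ‖γ • a - γ • b - ε • c‖ ≤ ‖γ • a - γ • b‖ + ‖ε • c‖ := norm_sub_le _ _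
        _ ≤ ‖γ • a‖ + ‖γ • b‖ + ‖ε • c‖ := by linarith [norm_sub_le (γ • a) (γ • b)]
        _ = |γ| * ‖a‖ + |γ| * ‖b‖ + |ε| * ‖c‖ := by
            simp [norm_smul, Real.norm_eq_abs]
    have hg : ‖gradient (f i) (xp i) - gradient (f i) (x i)‖ ^ 2 ≤ L ^ 2 * ‖xp i - x i‖ ^ 2 := by
      have := pow_le_pow_left₀ (norm_nonneg _) h1 2
      rw [mul_pow] at this
      exact this
    have hS : ‖xp i - x i‖ ^ 2
        ≤ 3 * (γ ^ 2 * ‖a‖ ^ 2 + γ ^ 2 * ‖b‖ ^ 2 + ε ^ 2 * ‖c‖ ^ 2) := by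
      have hq := pow_le_pow_left₀ (norm_nonneg _) h2 2
      have e1 : |γ| ^ 2 = γ ^ 2 := sq_abs γ
      have e2 : |ε| ^ 2 = ε ^ 2 := sq_abs ε
      nlinarith [sq_nonneg (|γ| * ‖a‖ - |γ| * ‖b‖), sq_nonneg (|γ| * ‖a‖ - |ε| * ‖c‖),
        sq_nonneg (|γ| * ‖b‖ - |ε| * ‖c‖)]
    calc ‖gradient (f i) (xp i) - gradient (f i) (x i)‖ ^ 2
        ≤ L ^ 2 * ‖xp i - x i‖ ^ 2 := hg
      _ ≤ L ^ 2 * (3 * (γ ^ 2 * ‖a‖ ^ 2 + γ ^ 2 * ‖b‖ ^ 2 + ε ^ 2 * ‖c‖ ^ 2)) :=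
          mul_le_mul_of_nonneg_left hS (sq_nonneg L)
      _ = 3 * L ^ 2 * γ ^ 2 * ‖a‖ ^ 2 + 3 * L ^ 2 * γ ^ 2 * ‖b‖ ^ 2
          + 3 * L ^ 2 * ε ^ 2 * ‖c‖ ^ 2 := by ring
  -- sum bounds for matrix parts
  have hsum1 : ∑ i, ‖((WithLp.equiv 2 (Fin p → ℝ)).symm (A1 i) : EuclideanSpace ℝ (Fin p))‖ ^ 2
      ≤ η ^ 2 * frobeniusNorm (X - Xh) ^ 2 := by
    have h := opnorm_rows (1 - W) (X - Xh)
    rw [frob_sq, ← hη] at *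
    calc ∑ i, ‖((WithLp.equiv 2 (Fin p → ℝ)).symm (A1 i) : EuclideanSpace ℝ (Fin p))‖ ^ 2
        = ∑ i, ∑ j, (A1 i j) ^ 2 := by
          apply Finset.sum_congr rfl; intro i _; rw [enorm_sq']; simp
      _ ≤ _ := by rw [hA1def]; exact h
  have hsum2 : ∑ i, ‖((WithLp.equiv 2 (Fin p → ℝ)).symm (A2 i) : EuclideanSpace ℝ (Fin p))‖ ^ 2
      ≤ η ^ 2 * frobeniusNorm (X - B) ^ 2 := by
    have h := opnorm_rows (1 - W) (X - B)
    rw [frob_sq, ← hη] at *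
    calc ∑ i, ‖((WithLp.equiv 2 (Fin p → ℝ)).symm (A2 i) : EuclideanSpace ℝ (Fin p))‖ ^ 2
        = ∑ i, ∑ j, (A2 i j) ^ 2 := by
          apply Finset.sum_congr rfl; intro i _; rw [enorm_sq']; simp
      _ ≤ _ := by rw [hA2def]; exact h
  have hsum3 : ∑ i, ‖((WithLp.equiv 2 (Fin p → ℝ)).symm (D i) : EuclideanSpace ℝ (Fin p))‖ ^ 2
      ≤ μ⁻¹ ^ 2 * ∑ i, ‖y i‖ ^ 2 := by
    rw [Finset.mul_sum]
    apply Finset.sum_le_sum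
    intro i _
    have h := inv_vec_bound hμ (Hs i (x i)) (hHsPSD i (x i)) ((WithLp.equiv 2 (Fin p → ℝ)) (y i))
    rw [Equiv.symm_apply_apply] at h
    rw [← hD i] at h
    have := pow_le_pow_left₀ (norm_nonneg _) h 2
    rw [mul_pow] at this
    exact this
  have hmono := Finset.sum_le_sum (fun i (_ : i ∈ Finset.univ) => hrowbound i)
  rw [Finset.sum_add_distrib, Finset.sum_add_distrib, ← Finset.mul_sum, ← Finset.mul_sum,
    ← Finset.mul_sum] at hmono
  have hc : (0:ℝ) ≤ 3 * L ^ 2 * γ ^ 2 := by positivity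
  have hc2 : (0:ℝ) ≤ 3 * L ^ 2 * ε ^ 2 := by positivity
  have t1 := mul_le_mul_of_nonneg_left hsum1 hc
  have t2 := mul_le_mul_of_nonneg_left hsum2 hc
  have t3 := mul_le_mul_of_nonneg_left hsum3 hc2
  have hfin : 3 * L ^ 2 * ε ^ 2 * (μ⁻¹ ^ 2 * ∑ i, ‖y i‖ ^ 2)
      = (3 * L ^ 2 * ε ^ 2 / μ ^ 2) * ∑ i, ‖y i‖ ^ 2 := by
    field_simp
  rw [hfin] at t3
  calc ∑ i, ‖gradient (f i) (xp i) - gradient (f i) (x i)‖ ^ 2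
      ≤ _ := hmono
    _ ≤ 3 * L ^ 2 * γ ^ 2 * (η ^ 2 * frobeniusNorm (X - Xh) ^ 2)
        + 3 * L ^ 2 * γ ^ 2 * (η ^ 2 * frobeniusNorm (X - B) ^ 2)
        + (3 * L ^ 2 * ε ^ 2 / μ ^ 2) * ∑ i, ‖y i‖ ^ 2 := by
          exact add_le_add (add_le_add t1 t2) t3
    _ = _ := by rw [hBdef]; ring
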